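/- Let l1,l2,l3>0 with l1+l2+l3=1, τ∈ℝ, and k∈ℂ with sin(kl2)≠0. Define u(x) := e^{−iτx}·(sin(k(l2−x)) + e^{iτ}·sin(kx))/sin(kl2) on [0,l2]. Then: (i) −(u''+2iτu'−τ²u) = k²u on (0,l2); (ii) u(0) = 1 and e^{−i(l1+l3)τ}·u(l2) = 1; and (iii) the condition (u'+iτu)(0) − e^{−i(l1+l3)τ}·(u'+iτu)(l2) = −k²(l1+l3)·u(0) holds if and only if 2cot(kl2) − 2cos(τ)/sin(kl2) = k(l1+l3). -/

import Mathlib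

noncomputable section

noncomputable def blochG (c k s : ℂ) (l2 : ℝ) (p q r t : ℂ) : ℝ → ℂ := fun x =>
  Complex.exp (-(c * x)) *
    ((p * Complex.sin (k * ((l2 : ℂ) - x)) + q * Complex.cos (k * ((l2 : ℂ) - x)) +
      r * Complex.sin (k * x) + t * Complex.cos (k * x)) / s)

lemma hasDerivAt_blochG (c k s : ℂ) (l2 : ℝ) (p q r t : ℂ) (x : ℝ) :
    HasDerivAt (blochG c k s l2 p q r t)
      (blochG c k s l2 (-c*p + q*k) (-c*q - p*k) (-c*r - t*k) (-c*t + r*k) x) x := by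
  have hid : ∀ z : ℂ, HasDerivAt (fun z : ℂ => z) 1 z := fun z => hasDerivAt_id z
  have key : ∀ z : ℂ, HasDerivAt (fun z : ℂ => Complex.exp (-(c * z)) *
      ((p * Complex.sin (k * ((l2 : ℂ) - z)) + q * Complex.cos (k * ((l2 : ℂ) - z)) +
        r * Complex.sin (k * z) + t * Complex.cos (k * z)) / s))
      (Complex.exp (-(c * z)) * (-c) *
          ((p * Complex.sin (k * ((l2:ℂ) - z)) + q * Complex.cos (k * ((l2:ℂ) - z)) +
            r * Complex.sin (k * z) + t * Complex.cos (k * z)) / s) +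
        Complex.exp (-(c * z)) *
          ((p * (Complex.cos (k*((l2:ℂ)-z)) * (-k)) + q * (-Complex.sin (k*((l2:ℂ)-z)) * (-k)) +
            r * (Complex.cos (k*z) * k) + t * (-Complex.sin (k*z) * k)) / s)) z := by
    intro z
    have h1 : HasDerivAt (fun z : ℂ => k * ((l2 : ℂ) - z)) (-k) z := by
      simpa using ((hid z).const_sub (l2 : ℂ)).const_mul k
    have h2 : HasDerivAt (fun z : ℂ => k * z) k z := by
      simpa using (hid z).const_mul k
    have h3 : HasDerivAt (fun z : ℂ => -(c * z)) (-c) z := by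
      have h := ((hid z).const_mul c).neg; rw [mul_one] at h; exact h
    have hS := ((((h1.csin.const_mul p).add (h1.ccos.const_mul q)).add
      (h2.csin.const_mul r)).add (h2.ccos.const_mul t)).div_const s
    exact h3.cexp.mul hS
  have h := (key x).comp_ofReal
  have hval : blochG c k s l2 (-c*p + q*k) (-c*q - p*k) (-c*r - t*k) (-c*t + r*k) x
      = Complex.exp (-(c * x)) * (-c) *
          ((p * Complex.sin (k * ((l2:ℂ) - x)) + q * Complex.cos (k * ((l2:ℂ) - x)) +
            r * Complex.sin (k * x) + t * Complex.cos (k * x)) / s) +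
        Complex.exp (-(c * x)) *
          ((p * (Complex.cos (k*((l2:ℂ)-x)) * (-k)) + q * (-Complex.sin (k*((l2:ℂ)-x)) * (-k)) +
            r * (Complex.cos (k*x) * k) + t * (-Complex.sin (k*x) * k)) / s) := by
    simp only [blochG]
    ring
  rw [hval]
  exact h

lemma deriv_blochG (c k s : ℂ) (l2 : ℝ) (p q r t : ℂ) :
    deriv (blochG c k s l2 p q r t)
      = blochG c k s l2 (-c*p + q*k) (-c*q - p*k) (-c*r - t*k) (-c*t + r*k) :=
  funext fun x => (hasDerivAt_blochG c k s l2 p q r t x).deriv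


/-- Section 6.1 of the paper: the Bloch eigenfunctions of the homogenised operator
`A_hom^{(τ)}`.  With `w_soft = e^{−i(l1+l3)τ}`, the explicit function
`u(x) = e^{−iτx}(sin k(l2−x) + e^{iτ} sin kx)/sin(k l2)` solves the spectral equation,
takes value `1` at both (weighted) endpoints, and satisfies the `δ`-type boundary
condition iff the dispersion relation `2 cot(k l2) − 2 cos τ / sin(k l2) = k(l1+l3)` holds. -/
theorem bloch_eigenfunction_delta (l1 l2 l3 : ℝ) (hl1 : 0 < l1) (hl2 : 0 < l2)
    (hl3 : 0 < l3) (hsum : l1 + l2 + l3 = 1) (τ : ℝ) (k : ℂ)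
    (hs : Complex.sin (k * l2) ≠ 0) (u : ℝ → ℂ)
    (hu : u = fun x : ℝ => Complex.exp (-(Complex.I * (τ : ℂ) * (x : ℂ))) *
      ((Complex.sin (k * ((l2 : ℂ) - (x : ℂ))) +
        Complex.exp (Complex.I * (τ : ℂ)) * Complex.sin (k * (x : ℂ))) /
        Complex.sin (k * l2))) :
    (∀ x ∈ Set.Ioo (0 : ℝ) l2,
      -(deriv (deriv u) x + 2 * Complex.I * (τ : ℂ) * deriv u x - (τ : ℂ) ^ 2 * u x)
        = k ^ 2 * u x) ∧
    u 0 = 1 ∧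
    Complex.exp (-(Complex.I * (((l1 + l3) * τ : ℝ) : ℂ))) * u l2 = 1 ∧
    (((deriv u 0 + Complex.I * (τ : ℂ) * u 0) -
        Complex.exp (-(Complex.I * (((l1 + l3) * τ : ℝ) : ℂ))) *
          (deriv u l2 + Complex.I * (τ : ℂ) * u l2)
        = -(k ^ 2 * ((l1 + l3 : ℝ) : ℂ) * u 0)) ↔
      (2 * Complex.cos (k * l2) / Complex.sin (k * l2)
          - 2 * Complex.cos (τ : ℂ) / Complex.sin (k * l2)
        = k * ((l1 + l3 : ℝ) : ℂ))) := by
  have hk : k ≠ 0 := by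
    intro h
    apply hs
    simp [h]
  have h13 : l1 + l3 = 1 - l2 := by linarith
  have h13c : (l1 : ℂ) + l3 = 1 - l2 := by exact_mod_cast congrArg (Complex.ofReal) h13
  set c : ℂ := Complex.I * (τ : ℂ) with hc
  set w : ℂ := Complex.exp (Complex.I * (τ : ℂ)) with hw
  set s : ℂ := Complex.sin (k * l2) with hsdef
  have hfun : u = blochG c k s l2 1 0 w 0 := by
    rw [hu]; funext x; simp only [blochG]; ring
  rw [hfun]
  simp only [deriv_blochG]
  refine ⟨?_, ?_, ?_, ?_⟩
  · intro x hx
    simp only [blochG]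
    linear_combination ((τ:ℂ)^2 * Complex.exp (-(c * x)) *
      (Complex.sin (k * ((l2:ℂ) - x)) + w * Complex.sin (k * x)) / s) * Complex.I_sq
  · simp only [blochG]
    push_cast
    simp [div_self hs]
    exact div_self hs
  · simp only [blochG]
    norm_num
    rw [mul_div_assoc, div_self hs, mul_one, hw, ← Complex.exp_add, ← Complex.exp_add]
    rw [show -(Complex.I * (((l1:ℂ) + ↑l3) * ↑τ)) + (-(c * ↑l2) + Complex.I * ↑τ) = 0 from by
      rw [hc]; linear_combination (-(Complex.I * (τ:ℂ))) * h13c]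
    exact Complex.exp_zero
  · simp only [blochG]
    norm_num
    rw [← hsdef]
    have e2 : Complex.exp (-(Complex.I * (((l1:ℂ) + ↑l3) * ↑τ))) * Complex.exp (-(c * ↑l2))
        = Complex.exp (-(Complex.I * (τ:ℂ))) := by
      rw [← Complex.exp_add]; congr 1; rw [hc]
      linear_combination (-(Complex.I * (τ:ℂ))) * h13c
    have hwV : w * Complex.exp (-(Complex.I * (τ:ℂ))) = 1 := by
      rw [hw, ← Complex.exp_add]; simp
    have hcos : 2 * Complex.cos (τ:ℂ) = w + Complex.exp (-(Complex.I * (τ:ℂ))) := by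
      rw [hw]
      have := Complex.two_cos (τ:ℂ)
      rw [mul_comm (τ:ℂ) Complex.I] at this
      convert this using 3
      ring
    have hL : (-(c * s) + -(k * Complex.cos (k * ↑l2)) + w * k) / s + c * (s / s) -
        Complex.exp (-(Complex.I * (((l1:ℂ) + ↑l3) * ↑τ))) *
          (Complex.exp (-(c * ↑l2)) * ((-k + -(c * w * s) + w * k * Complex.cos (k * ↑l2)) / s) +
            c * (Complex.exp (-(c * ↑l2)) * (w * s / s)))
        = (2 * k * Complex.cos (τ:ℂ) - 2 * k * Complex.cos (k * ↑l2)) / s := by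
      field_simp
      rw [← mul_assoc Complex.I] at e2
      linear_combination (k - w * k * Complex.cos (k * (l2:ℝ))) * e2 + (-k) * hcos +
        (-(k * Complex.cos (k * (l2:ℝ)))) * hwV
    rw [hL, div_self hs, mul_one]
    constructor <;> intro hh
    · rw [div_eq_iff hs] at hh
      rw [div_sub_div_same, div_eq_iff hs]
      refine mul_left_cancel₀ (neg_ne_zero.mpr hk) ?_
      linear_combination hh
    · rw [div_sub_div_same, div_eq_iff hs] at hh
      rw [div_eq_iff hs]
      linear_combination -k * hh
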